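/- Let Γ_p be an n1×n1 symmetric positive definite matrix with Γ_p = (L_pᵀ L_p)⁻¹ for an invertible matrix L_p, let Γ_m be an n2×n2 symmetric positive definite matrix with Γ_m = (L_mᵀ L_m)⁻¹ for an invertible matrix L_m, and let C be an n1×n2 matrix with operator norm strictly less than 1. Then the block matrix Γ = [[Γ_p, L_p⁻¹ C L_m⁻ᵀ],[L_m⁻¹ Cᵀ L_p⁻ᵀ, Γ_m]] is symmetric positive definite. -/

import Mathlib

open Matrix

/-- The operator (spectral) norm of a real matrix. -/
noncomputable def opNorm {m n : ℕ} (C : Matrix (Fin m) (Fin n) ℝ) : ℝ :=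
  ‖LinearMap.toContinuousLinearMap (Matrix.toEuclideanLin C)‖

lemma dotProduct_mulVec_le {m n : ℕ} (C : Matrix (Fin m) (Fin n) ℝ)
    (u : Fin m → ℝ) (v : Fin n → ℝ) :
    |u ⬝ᵥ C *ᵥ v| ≤ opNorm C * ‖(WithLp.equiv 2 _).symm u‖ * ‖(WithLp.equiv 2 _).symm v‖ := by
  set u' : EuclideanSpace ℝ (Fin m) := (WithLp.equiv 2 _).symm u
  set v' : EuclideanSpace ℝ (Fin n) := (WithLp.equiv 2 _).symm v
  have h1 : u ⬝ᵥ C *ᵥ v = inner ℝ u' (Matrix.toEuclideanLin C v') := by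
    rw [Matrix.toEuclideanLin_apply]
    simp [PiLp.inner_apply, dotProduct, u', v', mul_comm]
  rw [h1]
  calc |inner ℝ u' (Matrix.toEuclideanLin C v')| ≤ ‖u'‖ * ‖Matrix.toEuclideanLin C v'‖ :=
        abs_real_inner_le_norm _ _
    _ ≤ ‖u'‖ * (opNorm C * ‖v'‖) := by
        apply mul_le_mul_of_nonneg_left _ (norm_nonneg _)
        have := (LinearMap.toContinuousLinearMap (Matrix.toEuclideanLin C)).le_opNorm v'
        simpa [opNorm] using this
    _ = opNorm C * ‖u'‖ * ‖v'‖ := by ring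

lemma K_posDef {n1 n2 : ℕ} (C : Matrix (Fin n1) (Fin n2) ℝ) (hC : opNorm C < 1) :
    (Matrix.fromBlocks (1 : Matrix (Fin n1) (Fin n1) ℝ) C Cᵀ
      (1 : Matrix (Fin n2) (Fin n2) ℝ)).PosDef := by
  have hC0 : 0 ≤ opNorm C := norm_nonneg _
  refine posDef_iff_dotProduct_mulVec.mpr ⟨?_, ?_⟩
  · rw [Matrix.IsHermitian, fromBlocks_conjTranspose]
    simp [Matrix.IsHermitian]
  · intro x hx
    set u : Fin n1 → ℝ := x ∘ Sum.inl
    set v : Fin n2 → ℝ := x ∘ Sum.inr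
    have hmul := Matrix.fromBlocks_mulVec (1 : Matrix (Fin n1) (Fin n1) ℝ) C Cᵀ
      (1 : Matrix (Fin n2) (Fin n2) ℝ) x
    have hq : star x ⬝ᵥ (Matrix.fromBlocks 1 C Cᵀ 1) *ᵥ x
        = u ⬝ᵥ u + v ⬝ᵥ v + 2 * (u ⬝ᵥ C *ᵥ v) := by
      rw [show (star x : _ ⊕ _ → ℝ) = x from star_trivial x, hmul, Matrix.dotProduct_block]
      simp only [Sum.elim_comp_inl, Sum.elim_comp_inr, one_mulVec]
      have : v ⬝ᵥ Cᵀ *ᵥ u = u ⬝ᵥ C *ᵥ v := by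
        rw [mulVec_transpose, dotProduct_comm, dotProduct_mulVec]
      rw [dotProduct_add, dotProduct_add, this]; ring
    rw [hq]
    set u' : EuclideanSpace ℝ (Fin n1) := (WithLp.equiv 2 _).symm u
    set v' : EuclideanSpace ℝ (Fin n2) := (WithLp.equiv 2 _).symm v
    have hu : u ⬝ᵥ u = ‖u'‖ ^ 2 := by
      rw [← real_inner_self_eq_norm_sq]
      simp [PiLp.inner_apply, dotProduct, u']
      rw [EuclideanSpace.norm_sq_eq]; simp [sq]
    have hv : v ⬝ᵥ v = ‖v'‖ ^ 2 := by
      rw [← real_inner_self_eq_norm_sq]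
      simp [PiLp.inner_apply, dotProduct, v']
      rw [EuclideanSpace.norm_sq_eq]; simp [sq]
    have hbd := dotProduct_mulVec_le C u v
    have hpos : 0 < ‖u'‖ ^ 2 + ‖v'‖ ^ 2 := by
      rcases eq_or_ne u 0 with hu0 | hu0
      · have hv0 : v ≠ 0 := by
          intro hv0
          apply hx
          ext i
          cases i with
          | inl i => exact congrFun hu0 i
          | inr i => exact congrFun hv0 i
        have h2 : 0 < ‖v'‖ := norm_pos_iff.mpr (by simpa [v'] using hv0)
        nlinarith [sq_nonneg ‖u'‖]
      · have h2 : 0 < ‖u'‖ := norm_pos_iff.mpr (by simpa [u'] using hu0)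
        nlinarith [sq_nonneg ‖v'‖]
    have h1 : |u ⬝ᵥ C *ᵥ v| ≤ opNorm C * ‖u'‖ * ‖v'‖ := hbd
    have habs := abs_le.mp h1
    nlinarith [sq_nonneg (‖u'‖ - ‖v'‖), norm_nonneg u', norm_nonneg v']

lemma conj_posDef_sum {ι : Type*} [Fintype ι] [DecidableEq ι] {K M : Matrix ι ι ℝ} (hK : K.PosDef) (hM : IsUnit M) :
    (M * K * Mᵀ).PosDef := by
  refine posDef_iff_dotProduct_mulVec.mpr ⟨?_, ?_⟩
  · have hKh : Kᵀ = K := hK.1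
    rw [Matrix.IsHermitian]
    show (M * K * Mᵀ)ᵀ = _
    rw [Matrix.transpose_mul, Matrix.transpose_mul, Matrix.transpose_transpose, hKh, mul_assoc]
  · intro x hx
    have hy : Mᵀ *ᵥ x ≠ 0 := by
      have hMt : IsUnit Mᵀ := (Matrix.isUnit_iff_isUnit_det _).2
        (by simpa [Matrix.det_transpose] using (Matrix.isUnit_iff_isUnit_det _).1 hM)
      have hinj : Function.Injective (Mᵀ).mulVec :=
        Matrix.mulVec_injective_iff_isUnit.mpr hMt
      intro h
      apply hx
      have := hinj (a₂ := 0) (by simpa using h)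
      exact this
    have := (posDef_iff_dotProduct_mulVec.mp hK).2 hy
    rw [show (star x : _ → ℝ) = x from star_trivial x]
    rw [show (star (Mᵀ *ᵥ x) : _ → ℝ) = Mᵀ *ᵥ x from star_trivial _] at this
    calc (0:ℝ) < (Mᵀ *ᵥ x) ⬝ᵥ K *ᵥ Mᵀ *ᵥ x := this
      _ = x ⬝ᵥ (M * K * Mᵀ) *ᵥ x := by
          rw [← Matrix.mulVec_mulVec, ← Matrix.mulVec_mulVec, Matrix.dotProduct_mulVec x,
            ← Matrix.mulVec_transpose]

theorem joint_covariance_posDef {n1 n2 : ℕ}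
    (Lp : Matrix (Fin n1) (Fin n1) ℝ) (Lm : Matrix (Fin n2) (Fin n2) ℝ)
    (hLp : IsUnit Lp) (hLm : IsUnit Lm)
    (Γp : Matrix (Fin n1) (Fin n1) ℝ) (Γm : Matrix (Fin n2) (Fin n2) ℝ)
    (hΓp : Γp = (Lpᵀ * Lp)⁻¹) (hΓm : Γm = (Lmᵀ * Lm)⁻¹)
    (hΓppd : Γp.PosDef) (hΓmpd : Γm.PosDef)
    (C : Matrix (Fin n1) (Fin n2) ℝ) (hC : opNorm C < 1) :
    (Matrix.fromBlocks Γp (Lp⁻¹ * C * (Lm⁻¹)ᵀ) (Lm⁻¹ * Cᵀ * (Lp⁻¹)ᵀ) Γm).PosDef := by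
  have hA : Γp = Lp⁻¹ * (Lp⁻¹)ᵀ := by
    rw [hΓp, Matrix.mul_inv_rev, Matrix.transpose_nonsing_inv]
  have hB : Γm = Lm⁻¹ * (Lm⁻¹)ᵀ := by
    rw [hΓm, Matrix.mul_inv_rev, Matrix.transpose_nonsing_inv]
  set D : Matrix (Fin n1 ⊕ Fin n2) (Fin n1 ⊕ Fin n2) ℝ :=
    Matrix.fromBlocks Lp⁻¹ 0 0 Lm⁻¹ with hD
  set K : Matrix (Fin n1 ⊕ Fin n2) (Fin n1 ⊕ Fin n2) ℝ :=
    Matrix.fromBlocks 1 C Cᵀ 1 with hKdef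
  have hDu : IsUnit D := by
    rw [Matrix.isUnit_iff_isUnit_det, hD, Matrix.det_fromBlocks_zero₂₁]
    have h1 : IsUnit (Lp⁻¹) := Matrix.isUnit_nonsing_inv_iff.2 hLp
    have h2 : IsUnit (Lm⁻¹) := Matrix.isUnit_nonsing_inv_iff.2 hLm
    exact ((Matrix.isUnit_iff_isUnit_det _).1 h1).mul ((Matrix.isUnit_iff_isUnit_det _).1 h2)
  have key : Matrix.fromBlocks Γp (Lp⁻¹ * C * (Lm⁻¹)ᵀ) (Lm⁻¹ * Cᵀ * (Lp⁻¹)ᵀ) Γm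
      = D * K * Dᵀ := by
    rw [hA, hB, hD, hKdef, Matrix.fromBlocks_transpose, Matrix.fromBlocks_multiply,
      Matrix.fromBlocks_multiply]
    simp [Matrix.mul_assoc]
  rw [key]
  exact conj_posDef_sum (K_posDef C hC) hDu
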